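/- (Active-gate count versus Hamming weight.) Fix a circuit architecture of depth d on n qubits and let s = (s_0, …, s_d) be a legal Pauli path. Define G(s) to be the number of pairs (i, g) where i ∈ {1,…,d} and g = {j, M_i(j)} is a gate of layer i such that (s_{i−1}(j), s_{i−1}(M_i(j))) ≠ (I, I). Then G(s) ≤ |s| and |s| ≤ 4 · G(s). -/

import Mathlib

/-- Labels for the four single-qubit Paulis. -/
inductive PauliLabel : Type
  | I | X | Y | Z
  deriving DecidableEq

instance : Fintype PauliLabel :=
  ⟨{PauliLabel.I, PauliLabel.X, PauliLabel.Y, PauliLabel.Z}, fun x => by cases x <;> simp⟩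

/-- A circuit architecture of depth `d` on `n` qubits: each layer `i ∈ {1,…,d}` is a
fixed-point-free involution `M i` of the qubit set (a perfect matching); the unordered pairs
`{j, M i j}` are the 2-qubit gates of layer `i`. -/
structure Architecture (n d : ℕ) where
  M : Fin d → Fin n → Fin n
  involutive : ∀ i j, M i (M i j) = j
  fixedPointFree : ∀ i j, M i j ≠ j

/-- A Pauli path is a tuple `s = (s_0, …, s_d)` of layers, each assigning a Pauli label to
every qubit. -/
def PauliPath (n d : ℕ) : Type := Fin (d + 1) → Fin n → PauliLabel

/-- The Hamming weight of a Pauli path: the number of pairs `(i, j)` with `s i j ≠ I`. -/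
def pathWeight {n d : ℕ} (s : PauliPath n d) : ℕ :=
  (Finset.univ.filter fun p : Fin (d + 1) × Fin n => s p.1 p.2 ≠ PauliLabel.I).card

/-- A Pauli path is legal if (1) for every layer `i ∈ {1,…,d}` and every gate `{j, M i j}`,
the input pair `(s_{i−1} j, s_{i−1} (M i j))` is `(I, I)` iff the output pair
`(s_i j, s_i (M i j))` is `(I, I)`, and (2) `s_0` and `s_d` take values only in `{I, Z}`. -/
def IsLegal {n d : ℕ} (A : Architecture n d) (s : PauliPath n d) : Prop :=
  (∀ (i : Fin d) (j : Fin n),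
      ((s i.castSucc j = PauliLabel.I ∧ s i.castSucc (A.M i j) = PauliLabel.I) ↔
        (s i.succ j = PauliLabel.I ∧ s i.succ (A.M i j) = PauliLabel.I))) ∧
  (∀ j, s 0 j = PauliLabel.I ∨ s 0 j = PauliLabel.Z) ∧
  (∀ j, s (Fin.last d) j = PauliLabel.I ∨ s (Fin.last d) j = PauliLabel.Z)

/-- The number of active gates of a Pauli path: pairs `(i, g)` of a layer `i ∈ {1,…,d}` and a
gate `g = {j, M i j}` of layer `i` whose input pair `(s_{i−1} j, s_{i−1} (M i j))` is not
`(I, I)`.  Each gate is counted once, via its representative `j < M i j`. -/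
def activeGates {n d : ℕ} (A : Architecture n d) (s : PauliPath n d) : ℕ :=
  (Finset.univ.filter fun p : Fin d × Fin n =>
    p.2 < A.M p.1 p.2 ∧
      ¬(s p.1.castSucc p.2 = PauliLabel.I ∧
        s p.1.castSucc (A.M p.1 p.2) = PauliLabel.I)).card

private lemma rep_lt {n d : ℕ} (A : Architecture n d) (i : Fin d) (j : Fin n) :
    min j (A.M i j) < A.M i (min j (A.M i j)) := by
  rcases lt_or_gt_of_ne (A.fixedPointFree i j) with h | h
  · rw [min_eq_right h.le, A.involutive]; exact h
  · rw [min_eq_left h.le]; exact h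

private lemma rep_mem {n d : ℕ} (A : Architecture n d) (i : Fin d) (j : Fin n) :
    j = min j (A.M i j) ∨ j = A.M i (min j (A.M i j)) := by
  rcases lt_or_gt_of_ne (A.fixedPointFree i j) with h | h
  · right; rw [min_eq_right h.le, A.involutive]
  · left; rw [min_eq_left h.le]

private lemma card4 {α : Type*} [DecidableEq α] (a b c e : α) :
    ({a, b, c, e} : Finset α).card ≤ 4 := by
  apply (Finset.card_insert_le _ _).trans
  apply Nat.succ_le_succ
  apply (Finset.card_insert_le _ _).trans
  apply Nat.succ_le_succ
  apply (Finset.card_insert_le _ _).trans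
  simp

/-- For a legal Pauli path, the number of active gates `G(s)` satisfies
`G(s) ≤ |s|` and `|s| ≤ 4 · G(s)`. -/
theorem active_gates_vs_weight (n d : ℕ) (hn : Even n) (hn0 : 0 < n) (hd : 1 ≤ d)
    (A : Architecture n d) (s : PauliPath n d) (hs : IsLegal A s) :
    activeGates A s ≤ pathWeight s ∧ pathWeight s ≤ 4 * activeGates A s := by
  classical
  obtain ⟨hlegal, h0, hlastZ⟩ := hs
  constructor
  · -- G ≤ W
    unfold activeGates pathWeight
    apply Finset.card_le_card_of_injOn
      (fun p => (p.1.castSucc, if s p.1.castSucc p.2 = PauliLabel.I then A.M p.1 p.2 else p.2))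
    · rintro ⟨i, j⟩ hp
      simp only [Finset.mem_coe, Finset.mem_filter, Finset.mem_univ, true_and] at hp ⊢
      split_ifs with h
      · exact fun hc => hp.2 ⟨h, hc⟩
      · exact h
    · rintro ⟨i1, j1⟩ hp1 ⟨i2, j2⟩ hp2 heq
      simp only [Finset.coe_filter, Set.mem_setOf_eq, Finset.mem_univ, true_and] at hp1 hp2
      have h1 := congrArg Prod.fst heq
      have h2 := congrArg Prod.snd heq
      simp only at h1 h2
      have hi : i1 = i2 := Fin.castSucc_injective _ h1
      subst hi
      rw [h1] at h2
      have hj : j1 = j2 := by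
        split_ifs at h2 with ha hb hb
        · have := congrArg (A.M i1) h2
          rwa [A.involutive, A.involutive] at this
        · exfalso
          have h2' : A.M i1 j2 = j1 := by rw [← h2, A.involutive]
          exact lt_asymm (h2 ▸ hp1.1) (h2' ▸ hp2.1)
        · exfalso
          have h2' : A.M i1 j1 = j2 := by rw [h2, A.involutive]
          exact lt_asymm (h2' ▸ hp1.1) (h2 ▸ hp2.1)
        · exact h2
      rw [hj]
  · -- W ≤ 4 G
    unfold activeGates pathWeight
    set T : Finset (Fin d × Fin n) := Finset.univ.filter fun p : Fin d × Fin n =>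
      p.2 < A.M p.1 p.2 ∧
        ¬(s p.1.castSucc p.2 = PauliLabel.I ∧
          s p.1.castSucc (A.M p.1 p.2) = PauliLabel.I) with hT
    have hd' : d - 1 < d := by omega
    set f : Fin (d + 1) × Fin n → Fin d × Fin n := fun p =>
      if h : (p.1 : ℕ) < d then (⟨p.1, h⟩, min p.2 (A.M ⟨p.1, h⟩ p.2))
      else (⟨d - 1, hd'⟩, min p.2 (A.M ⟨d - 1, hd'⟩ p.2)) with hf
    apply Finset.card_le_mul_card_image_of_maps_to (f := f) (t := T)
    · rintro ⟨i, j⟩ hp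
      simp only [Finset.mem_filter, Finset.mem_univ, true_and] at hp
      by_cases h : (i : ℕ) < d
      · simp only [hf, dif_pos h, hT, Finset.mem_filter, Finset.mem_univ, true_and]
        refine ⟨rep_lt A _ _, ?_⟩
        have hcs : (⟨(i : ℕ), h⟩ : Fin d).castSucc = i := by ext; rfl
        rw [hcs]
        rcases rep_mem A ⟨(i : ℕ), h⟩ j with hm | hm
        · exact fun hc => hp (by rw [hm]; exact hc.1)
        · exact fun hc => hp (by rw [hm]; exact hc.2)
      · simp only [hf, dif_neg h, hT, Finset.mem_filter, Finset.mem_univ, true_and]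
        refine ⟨rep_lt A _ _, ?_⟩
        have hsucc : (⟨d - 1, hd'⟩ : Fin d).succ = i := by
          ext; simp only [Fin.val_succ]; omega
        intro hc
        have hout := (hlegal ⟨d - 1, hd'⟩ (min j (A.M ⟨d - 1, hd'⟩ j))).mp hc
        rw [hsucc] at hout
        rcases rep_mem A ⟨d - 1, hd'⟩ j with hm | hm
        · exact hp (by rw [hm]; exact hout.1)
        · exact hp (by rw [hm]; exact hout.2)
    · intro a _
      refine le_trans (Finset.card_le_card
          (t := ({(a.1.castSucc, a.2), (a.1.castSucc, A.M a.1 a.2),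
            (Fin.last d, a.2), (Fin.last d, A.M a.1 a.2)} : Finset (Fin (d + 1) × Fin n))) ?_)
          (card4 _ _ _ _)
      · rintro ⟨i, j⟩ hp
        simp only [Finset.mem_filter] at hp
        obtain ⟨-, hfp⟩ := hp
        simp only [Finset.mem_insert, Finset.mem_singleton]
        by_cases h : (i : ℕ) < d
        · simp only [hf, dif_pos h] at hfp
          have ha1 : a.1 = ⟨(i : ℕ), h⟩ := (congrArg Prod.fst hfp).symm
          have ha2 : a.2 = min j (A.M ⟨(i : ℕ), h⟩ j) := (congrArg Prod.snd hfp).symm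
          have hi : i = a.1.castSucc := by ext; rw [ha1]; rfl
          rcases rep_mem A ⟨(i : ℕ), h⟩ j with hm | hm
          · left; exact Prod.ext hi (hm.trans ha2.symm)
          · right; left; exact Prod.ext hi (by rw [ha1, ha2]; exact hm)
        · simp only [hf, dif_neg h] at hfp
          have ha1 : a.1 = ⟨d - 1, hd'⟩ := (congrArg Prod.fst hfp).symm
          have ha2 : a.2 = min j (A.M ⟨d - 1, hd'⟩ j) := (congrArg Prod.snd hfp).symm
          have hi : i = Fin.last d := by ext; simp only [Fin.val_last]; omega
          rcases rep_mem A ⟨d - 1, hd'⟩ j with hm | hm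
          · right; right; left; exact Prod.ext hi (hm.trans ha2.symm)
          · right; right; right; exact Prod.ext hi (by rw [ha1, ha2]; exact hm)
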